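/- Let (A, p, 0, ½, 1) be a mobi algebra and define the unary operation ā = p(1,a,0). Then for all a, b, c ∈ A: (1) the double complement satisfies a̿ = a; (2) 1̄ = 0; (3) p(b,c,a) = p(a, c̄, b); (4) the complement of p(a,c,b) equals p(ā, c, b̄). -/
import Mathlib


/-- A mobi algebra: a set with a ternary operation `p` and constants `e0`, `half`, `e1`. -/
structure MobiAlgebra (A : Type*) where
  p : A → A → A → A
  e0 : A
  half : A
  e1 : A
  A1 : p e1 half e0 = half
  A2 : ∀ a, p e0 a e1 = a
  A3 : ∀ a b, p a b a = a
  A4 : ∀ a b, p a e0 b = a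
  A5 : ∀ a b, p a e1 b = b
  A6 : ∀ a a' b, p a half b = p a' half b → a = a'
  A7 : ∀ a b c1 c2 c3, p a (p c1 c2 c3) b = p (p a c1 b) c2 (p a c3 b)
  A8 : ∀ a1 a2 b1 b2 c,
    p (p a1 c b1) half (p a2 c b2) = p (p a1 half a2) c (p b1 half b2)

/-- Properties (PC0)-(PC3),(PC5) of the derived complement ā = p(1,a,0)
in a mobi algebra. -/
theorem mobi_complement_props {A : Type*} (M : MobiAlgebra A) (a b c : A) :
    M.p M.e1 (M.p M.e1 a M.e0) M.e0 = a ∧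
    M.p M.e1 M.e1 M.e0 = M.e0 ∧
    M.p b c a = M.p a (M.p M.e1 c M.e0) b ∧
    M.p M.e1 (M.p a c b) M.e0 =
      M.p (M.p M.e1 a M.e0) c (M.p M.e1 b M.e0) := by
  refine ⟨?_, ?_, ?_, ?_⟩
  · rw [M.A7, M.A5, M.A4, M.A2]
  · exact M.A5 _ _
  · rw [M.A7, M.A5, M.A4]
  · exact M.A7 _ _ _ _ _
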